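/- arXiv:0907.2836 — 2 statements merged into one kernel-verified Lean document; each statement's English description precedes it below -/
import Mathlib

section
/- If p(z) is a complex polynomial of degree n with all its zeros in |z| < k where k ≥ 1, then max_{|z|=1} |p'(z)| ≥ (n/(1+k^n)) · max_{|z|=1} |p(z)|. -/
open Polynomial

noncomputable def maxMod (p : Polynomial ℂ) (c : ℝ) : ℝ :=
  sSup ((fun z => ‖p.eval z‖) '' {z : ℂ | ‖z‖ = c})

noncomputable def minMod (p : Polynomial ℂ) (c : ℝ) : ℝ :=
  sInf ((fun z => ‖p.eval z‖) '' {z : ℂ | ‖z‖ = c})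

noncomputable def polarDeriv (p : Polynomial ℂ) (α : ℂ) : Polynomial ℂ :=
  C (p.natDegree : ℂ) * p + (C α - X) * derivative p

section Aux

lemma sphere_set (c : ℝ) : {z : ℂ | ‖z‖ = c} = Metric.sphere (0:ℂ) c := by
  ext z; simp [Metric.mem_sphere, Complex.dist_eq]

lemma maxMod_bddAbove (p : Polynomial ℂ) (c : ℝ) :
    BddAbove ((fun z => ‖p.eval z‖) '' {z : ℂ | ‖z‖ = c}) := by
  rw [sphere_set]
  exact ((isCompact_sphere (0:ℂ) c).image
    (continuous_norm.comp (p.continuous_aeval))).bddAbove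

lemma le_maxMod (p : Polynomial ℂ) {c : ℝ} {z : ℂ} (hz : ‖z‖ = c) :
    ‖p.eval z‖ ≤ maxMod p c :=
  le_csSup (maxMod_bddAbove p c) ⟨z, hz, rfl⟩

lemma maxMod_nonneg (p : Polynomial ℂ) (c : ℝ) : 0 ≤ maxMod p c :=
  Real.sSup_nonneg (by rintro x ⟨z, _, rfl⟩; exact norm_nonneg _)

lemma maxMod_le (p : Polynomial ℂ) {c C : ℝ} (hc : 0 ≤ c) (hC : 0 ≤ C)
    (h : ∀ z : ℂ, ‖z‖ = c → ‖p.eval z‖ ≤ C) :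
    maxMod p c ≤ C := by
  apply Real.sSup_le _ hC
  rintro x ⟨z, hz, rfl⟩; exact h z hz

lemma abs_le_maxMod_of_le (p : Polynomial ℂ) {R : ℝ} (hR : 0 < R) {z : ℂ}
    (hz : ‖z‖ ≤ R) : ‖p.eval z‖ ≤ maxMod p R := by
  have h := Complex.norm_le_of_forall_mem_frontier_norm_le
    (U := Metric.ball (0:ℂ) R) Metric.isBounded_ball
    ((p.differentiable).diffContOnCl) (C := maxMod p R) ?_ (z := z) ?_
  · simpa using h
  · intro w hw
    rw [frontier_ball _ hR.ne'] at hw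
    have : ‖w‖ = R := by simpa [Complex.dist_eq] using hw
    simpa using le_maxMod p this
  · rw [closure_ball _ hR.ne']
    simpa [Complex.dist_eq] using hz

lemma maxMod_mono (p : Polynomial ℂ) {r R : ℝ} (hr : 0 ≤ r) (hR : 0 < R) (h : r ≤ R) :
    maxMod p r ≤ maxMod p R := by
  apply maxMod_le p hr (maxMod_nonneg p R)
  intro z hz
  exact abs_le_maxMod_of_le p hR (hz ▸ h)

open Finset in
noncomputable def refl' (g : Polynomial ℂ) : Polynomial ℂ :=
  ∑ j ∈ range (g.natDegree + 1), C (g.coeff j) * X ^ (g.natDegree - j)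

open Finset in
lemma refl'_eval (g : Polynomial ℂ) {w : ℂ} (hw : w ≠ 0) :
    (refl' g).eval w = w ^ g.natDegree * g.eval w⁻¹ := by
  rw [refl', Polynomial.eval_finset_sum, Polynomial.eval_eq_sum_range, Finset.mul_sum]
  refine Finset.sum_congr rfl fun j hj => ?_
  rw [Finset.mem_range] at hj
  have hj' : j ≤ g.natDegree := Nat.lt_succ_iff.mp hj
  simp only [eval_mul, eval_C, eval_pow, eval_X]
  rw [pow_sub₀ w hw hj']
  field_simp
  rw [mul_assoc, ← mul_pow, mul_one_div_cancel hw, one_pow, mul_one]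

lemma maxMod_growth (g : Polynomial ℂ) {k : ℝ} (hk : 1 ≤ k) :
    maxMod g k ≤ k ^ g.natDegree * maxMod g 1 := by
  have hk0 : (0:ℝ) < k := lt_of_lt_of_le one_pos hk
  have h1 : maxMod (refl' g) 1 ≤ maxMod g 1 := by
    apply maxMod_le _ zero_le_one (maxMod_nonneg g 1)
    intro w hw
    have hw0 : w ≠ 0 := by
      intro h; rw [h] at hw; simp at hw
    rw [refl'_eval g hw0, norm_mul, norm_pow, hw, one_pow, one_mul]
    exact le_maxMod g (by rw [norm_inv, hw, inv_one])
  apply maxMod_le _ hk0.le (mul_nonneg (by positivity) (maxMod_nonneg g 1))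
  intro z hz
  have hz0 : z ≠ 0 := by
    intro h; rw [h] at hz; simp at hz; linarith
  have hzi : ‖z⁻¹‖ ≤ 1 := by
    rw [norm_inv, hz]; exact inv_le_one_of_one_le₀ hk
  have key : g.eval z = z ^ g.natDegree * (refl' g).eval z⁻¹ := by
    rw [refl'_eval g (inv_ne_zero hz0), inv_inv, inv_pow]
    field_simp
  rw [key, norm_mul, norm_pow, hz]
  have := abs_le_maxMod_of_le (refl' g) one_pos hzi
  calc k ^ g.natDegree * ‖(refl' g).eval z⁻¹‖
      ≤ k ^ g.natDegree * maxMod (refl' g) 1 := by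
        apply mul_le_mul_of_nonneg_left this (by positivity)
    _ ≤ k ^ g.natDegree * maxMod g 1 := by
        apply mul_le_mul_of_nonneg_left h1 (by positivity)

lemma eval_prod_ne_zero (s : Multiset ℂ) (z : ℂ) (h : ∀ r ∈ s, z ≠ r) :
    ((s.map fun r => X - C r).prod).eval z ≠ 0 := by
  rw [Polynomial.eval_multiset_prod]
  apply Multiset.prod_ne_zero
  intro h0
  rw [Multiset.mem_map] at h0
  obtain ⟨q, hq, hq0⟩ := h0
  rw [Multiset.mem_map] at hq
  obtain ⟨r, hr, rfl⟩ := hq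
  simp only [eval_sub, eval_X, eval_C] at hq0
  exact h r hr (by linear_combination hq0)

lemma logderiv_sum (s : Multiset ℂ) (z : ℂ) (h : ∀ r ∈ s, z ≠ r) :
    (derivative (s.map fun r => X - C r).prod).eval z =
      ((s.map fun r => X - C r).prod).eval z * (s.map fun r => 1 / (z - r)).sum := by
  induction s using Multiset.induction with
  | empty => simp
  | cons a t ih =>
    have ha : z - a ≠ 0 := sub_ne_zero.mpr (h a (Multiset.mem_cons_self a t))
    have ht : ∀ r ∈ t, z ≠ r := fun r hr => h r (Multiset.mem_cons_of_mem hr)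
    simp only [Multiset.map_cons, Multiset.prod_cons, Multiset.sum_cons,
      derivative_mul, derivative_sub, derivative_X, derivative_C, sub_zero, one_mul,
      eval_add, eval_mul, eval_sub, eval_X, eval_C]
    rw [ih ht]
    field_simp

lemma half_le_re (z r : ℂ) (hz : ‖z‖ = 1) (hr : ‖r‖ < 1) :
    1 / 2 ≤ (z / (z - r)).re := by
  have h1 : Complex.normSq z = 1 := by rw [← Complex.sq_norm, hz]; norm_num
  have h2 : Complex.normSq r < 1 := by
    rw [← Complex.sq_norm]; nlinarith [norm_nonneg r]
  have hzr : z - r ≠ 0 := by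
    intro h0
    rw [sub_eq_zero] at h0
    rw [h0] at h1; rw [h1] at h2; linarith
  have hd : 0 < Complex.normSq (z - r) := Complex.normSq_pos.mpr hzr
  rw [Complex.div_re, ← add_div, le_div_iff₀ hd]
  have e3 : Complex.normSq (z - r) = (z.re - r.re) * (z.re - r.re)
      + (z.im - r.im) * (z.im - r.im) := by
    rw [Complex.normSq_apply]; simp [Complex.sub_re, Complex.sub_im]
  have e1 : Complex.normSq z = z.re * z.re + z.im * z.im := Complex.normSq_apply z
  have e2 : Complex.normSq r = r.re * r.re + r.im * r.im := Complex.normSq_apply r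
  simp only [Complex.sub_re, Complex.sub_im]
  nlinarith

lemma turan_pointwise (P : Polynomial ℂ) (hroots : ∀ r ∈ P.roots, ‖r‖ < 1)
    {z : ℂ} (hz : ‖z‖ = 1) :
    ‖(P.natDegree : ℂ) * P.eval z - z * (derivative P).eval z‖
      ≤ ‖z * (derivative P).eval z‖ := by
  by_cases hP : P = 0
  · simp [hP]
  have hsplit : P.Splits := IsAlgClosed.splits P
  have hfact := hsplit.eq_prod_roots
  have hcard : Multiset.card P.roots = P.natDegree := (splits_iff_card_roots).mp hsplit
  set s := P.roots with hs
  set n := P.natDegree with hn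
  have hne : ∀ r ∈ s, z ≠ r := by
    intro r hr h0
    have := hroots r hr
    rw [← h0, hz] at this
    exact lt_irrefl 1 this
  set Q := (s.map fun r => X - C r).prod with hQ
  set c := P.leadingCoeff with hc
  have hQz : Q.eval z ≠ 0 := eval_prod_ne_zero s z hne
  set T := (s.map fun r => 1 / (z - r)).sum with hT
  have hlog : (derivative Q).eval z = Q.eval z * T := logderiv_sum s z hne
  set A := z * T with hA
  have hre : (n : ℝ) / 2 ≤ A.re := by
    have hA2 : A = (s.map fun r => z / (z - r)).sum := by
      rw [hA, hT, ← Multiset.sum_map_mul_left]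
      congr 1
      apply Multiset.map_congr rfl
      intro r _
      rw [mul_one_div]
    have hres : ∀ (t : Multiset ℂ), t.sum.re = (t.map Complex.re).sum := by
      intro t
      induction t using Multiset.induction with
      | empty => simp
      | cons a t ih => simp [ih]
    have : A.re = (s.map fun r => (z / (z - r)).re).sum := by
      rw [hA2, hres, Multiset.map_map]
      rfl
    rw [this]
    have hsum := Multiset.card_nsmul_le_sum
      (s := s.map fun r => (z / (z - r)).re) (a := (1:ℝ)/2) ?_
    · rw [Multiset.card_map, hcard] at hsum
      calc (n:ℝ)/2 = n • ((1:ℝ)/2) := by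
            rw [nsmul_eq_mul]; ring
        _ ≤ _ := hsum
    · intro x hx
      rw [Multiset.mem_map] at hx
      obtain ⟨r, hr, rfl⟩ := hx
      exact half_le_re z r hz (hroots r hr)
  have hkey : ‖(n : ℂ) - A‖ ≤ ‖A‖ := by
    rw [Complex.norm_def, Complex.norm_def]
    apply Real.sqrt_le_sqrt
    rw [Complex.normSq_apply, Complex.normSq_apply]
    simp only [Complex.sub_re, Complex.sub_im, Complex.natCast_re, Complex.natCast_im]
    nlinarith [hre]
  have ePz : P.eval z = c * Q.eval z := by
    conv_lhs => rw [hfact]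
    rw [eval_mul, eval_C]
  have ePz' : (derivative P).eval z = c * (Q.eval z * T) := by
    conv_lhs => rw [hfact]
    rw [derivative_mul, derivative_C, zero_mul, zero_add, eval_mul, eval_C, hlog]
  have e1 : (n : ℂ) * P.eval z - z * (derivative P).eval z
      = c * Q.eval z * ((n : ℂ) - A) := by
    rw [ePz, ePz', hA]; ring
  have e2 : z * (derivative P).eval z = c * Q.eval z * A := by
    rw [ePz', hA]; ring
  rw [e1, e2]; simp only [norm_mul]
  exact mul_le_mul_of_nonneg_left hkey (mul_nonneg (norm_nonneg _) (norm_nonneg _))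

end Aux

theorem stmt4 (p : Polynomial ℂ) (n : ℕ) (hn : p.natDegree = n) (k : ℝ)
    (hk : 1 ≤ k)
    (hz : ∀ z : ℂ, p.IsRoot z → ‖z‖ < k) :
    (n / (1 + k ^ n)) * maxMod p 1 ≤ maxMod (derivative p) 1 := by
  have hk0 : (0:ℝ) < k := lt_of_lt_of_le one_pos hk
  rcases Nat.eq_zero_or_pos n with hn0 | hn1
  · subst hn0
    simp only [Nat.cast_zero, zero_div, zero_mul]
    exact maxMod_nonneg _ 1
  -- n ≥ 1
  have hkc : (k:ℂ) ≠ 0 := by exact_mod_cast hk0.ne'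
  set P := p.comp (C (k:ℂ) * X) with hP
  have hPdeg : P.natDegree = n := by
    rw [hP, natDegree_comp, natDegree_C_mul_X _ hkc, mul_one, hn]
  have hProots : ∀ r ∈ P.roots, ‖r‖ < 1 := by
    intro r hr
    have hroot : P.IsRoot r := (mem_roots'.mp hr).2
    have : p.eval ((k:ℂ) * r) = 0 := by
      have := hroot
      rwa [IsRoot, hP, eval_comp, eval_mul, eval_C, eval_X] at this
    have habs := hz _ this
    rw [norm_mul, Complex.norm_of_nonneg hk0.le] at habs
    nlinarith [norm_nonneg r]
  set Rq := C (n:ℂ) * p - X * derivative p with hRq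
  -- pointwise bound on the sphere of radius k
  have hpt : ∀ w : ℂ, ‖w‖ = k →
      ‖Rq.eval w‖ ≤ k * ‖(derivative p).eval w‖ := by
    intro w hw
    set z := w / (k:ℂ) with hzdef
    have hzw : (k:ℂ) * z = w := by rw [hzdef]; field_simp
    have hz1 : ‖z‖ = 1 := by
      rw [hzdef, norm_div, hw, Complex.norm_of_nonneg hk0.le, div_self hk0.ne']
    have ht := turan_pointwise P hProots hz1
    rw [hPdeg] at ht
    have hPe : P.eval z = p.eval w := by
      rw [hP, eval_comp, eval_mul, eval_C, eval_X, hzw]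
    have hPd : (derivative P).eval z = (k:ℂ) * (derivative p).eval w := by
      rw [hP, derivative_comp]
      simp only [derivative_mul, derivative_C, derivative_X, zero_mul, mul_one,
        zero_add, eval_mul, eval_comp, eval_C, eval_X, hzw]
    rw [hPe, hPd] at ht
    have hl : (n:ℂ) * p.eval w - z * ((k:ℂ) * (derivative p).eval w) = Rq.eval w := by
      rw [hRq]
      simp only [eval_sub, eval_mul, eval_C, eval_X]
      rw [← hzw]; ring
    rw [hl] at ht
    calc ‖Rq.eval w‖ ≤ ‖z * ((k:ℂ) * (derivative p).eval w)‖ := ht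
      _ = k * ‖(derivative p).eval w‖ := by
          rw [norm_mul, norm_mul, hz1, one_mul, Complex.norm_of_nonneg hk0.le]
  set d := (derivative p).natDegree with hdd
  have hd : d + 1 ≤ n := by
    have := natDegree_derivative_le p
    rw [hn] at this
    omega
  have hM1 : maxMod Rq 1 ≤ k ^ n * maxMod (derivative p) 1 := by
    calc maxMod Rq 1 ≤ maxMod Rq k := maxMod_mono Rq zero_le_one hk0 hk
      _ ≤ k * maxMod (derivative p) k := by
          apply maxMod_le _ hk0.le (mul_nonneg hk0.le (maxMod_nonneg _ _))
          intro w hw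
          exact le_trans (hpt w hw)
            (mul_le_mul_of_nonneg_left (le_maxMod _ hw) hk0.le)
      _ ≤ k * (k ^ d * maxMod (derivative p) 1) :=
          mul_le_mul_of_nonneg_left (maxMod_growth _ hk) hk0.le
      _ = k ^ (d + 1) * maxMod (derivative p) 1 := by ring
      _ ≤ k ^ n * maxMod (derivative p) 1 :=
          mul_le_mul_of_nonneg_right (pow_le_pow_right₀ hk hd) (maxMod_nonneg _ _)
  have htri : ∀ z : ℂ, ‖z‖ = 1 →
      (n:ℝ) * ‖p.eval z‖ ≤ maxMod (derivative p) 1 + maxMod Rq 1 := by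
    intro z hz1
    have e : (n:ℂ) * p.eval z = z * (derivative p).eval z + Rq.eval z := by
      rw [hRq]
      simp only [eval_sub, eval_mul, eval_C, eval_X]
      ring
    calc (n:ℝ) * ‖p.eval z‖ = ‖(n:ℂ) * p.eval z‖ := by
          rw [norm_mul, Complex.norm_natCast]
      _ = ‖z * (derivative p).eval z + Rq.eval z‖ := by rw [e]
      _ ≤ ‖z * (derivative p).eval z‖ + ‖Rq.eval z‖ :=
          norm_add_le _ _
      _ = ‖(derivative p).eval z‖ + ‖Rq.eval z‖ := by
          rw [norm_mul, hz1, one_mul]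
      _ ≤ maxMod (derivative p) 1 + maxMod Rq 1 :=
          add_le_add (le_maxMod _ hz1) (le_maxMod _ hz1)
  have hnpos : (0:ℝ) < n := by exact_mod_cast hn1
  have hmain : (n:ℝ) * maxMod p 1 ≤ maxMod (derivative p) 1 + maxMod Rq 1 := by
    have h1 : maxMod p 1 ≤ (maxMod (derivative p) 1 + maxMod Rq 1) / n := by
      apply maxMod_le p zero_le_one
        (div_nonneg (add_nonneg (maxMod_nonneg _ _) (maxMod_nonneg _ _)) hnpos.le)
      intro z hz1
      rw [le_div_iff₀ hnpos, mul_comm]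
      exact htri z hz1
    calc (n:ℝ) * maxMod p 1 ≤ n * ((maxMod (derivative p) 1 + maxMod Rq 1) / n) :=
          mul_le_mul_of_nonneg_left h1 hnpos.le
      _ = maxMod (derivative p) 1 + maxMod Rq 1 := by field_simp
  rw [div_mul_eq_mul_div, div_le_iff₀ (by positivity : (0:ℝ) < 1 + k ^ n)]
  nlinarith [hM1, hmain, maxMod_nonneg (derivative p) 1]
end

section
/- Let p(z) = a_n z^n + Σ_{ν=μ}^{n} a_{n-ν} z^{n-ν}, 1 ≤ μ ≤ n, be a polynomial of degree n with all zeros in |z| ≤ k, k ≤ 1. Then max_{|z|=1} |p'(z)| ≥ (n/(1+k^μ)) · ( max_{|z|=1} |p(z)| + k^{-(n-μ)} · min_{|z|=k} |p(z)| ). -/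
open Polynomial

noncomputable def Complex.abs : AbsoluteValue ℂ ℝ where
  toFun z := ‖z‖
  map_mul' := norm_mul
  nonneg' := norm_nonneg
  eq_zero' _ := norm_eq_zero
  add_le' := norm_add_le

lemma Complex.abs_apply (z : ℂ) : Complex.abs z = Real.sqrt (Complex.normSq z) := by
  show ‖z‖ = _; exact Complex.norm_def z

lemma Complex.sq_abs (z : ℂ) : Complex.abs z ^ 2 = Complex.normSq z := Complex.sq_norm z

@[simp]
lemma Complex.abs_ofReal (r : ℝ) : Complex.abs (r : ℂ) = |r| := by
  show ‖(r:ℂ)‖ = |r|; simp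

@[simp]
lemma Complex.abs_natCast (n : ℕ) : Complex.abs (n : ℂ) = n := by
  show ‖(n:ℂ)‖ = n; simp

lemma Complex.continuous_abs : Continuous Complex.abs := continuous_norm

lemma Complex.norm_eq_abs (z : ℂ) : ‖z‖ = Complex.abs z := rfl

section AzizShah

open Complex Finset


lemma re_inv_one_sub {u : ℂ} (h : Complex.abs u ≤ 1) (h1 : u ≠ 1) :
    (2:ℝ)⁻¹ ≤ ((1 - u)⁻¹).re := by
  have hne : (1 : ℂ) - u ≠ 0 := sub_ne_zero.mpr (Ne.symm h1)
  have hns : 0 < Complex.normSq (1 - u) := Complex.normSq_pos.mpr hne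
  rw [Complex.inv_re, Complex.sub_re, Complex.one_re, div_eq_mul_inv, ← div_eq_mul_inv,
    le_div_iff₀ hns]
  have habs : u.re ^ 2 + u.im ^ 2 ≤ 1 := by
    have h2 := Complex.sq_abs u
    rw [Complex.normSq_apply] at h2
    nlinarith [Complex.abs.nonneg u]
  have hnsle : Complex.normSq (1 - u) = 1 - 2*u.re + (u.re^2 + u.im^2) := by
    rw [Complex.normSq_apply]; simp; ring
  nlinarith

lemma DE {n : ℕ} (π ε : ℂ) (hπ : π ≠ 0) (h : (n:ℝ)/2 ≤ (ε/π).re) :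
    Complex.abs ((n:ℂ)*π - ε) ≤ Complex.abs ε := by
  set w := ε/π with hw
  have h2 : ε = π * w := (mul_div_cancel₀ ε hπ).symm
  have key : Complex.normSq ((n:ℂ)*π - ε) ≤ Complex.normSq ε := by
    have h1 : ((n:ℂ)*π - ε) = π * ((n:ℂ) - w) := by rw [h2]; ring
    rw [h1, Complex.normSq_mul, h2, Complex.normSq_mul]
    have hns : 0 < Complex.normSq π := Complex.normSq_pos.mpr hπ
    have hwn : Complex.normSq ((n:ℂ) - w) ≤ Complex.normSq w := by
      rw [Complex.normSq_apply, Complex.normSq_apply]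
      simp only [Complex.sub_re, Complex.sub_im, Complex.natCast_re, Complex.natCast_im]
      nlinarith [h]
    nlinarith
  rw [Complex.abs_apply, Complex.abs_apply]
  exact Real.sqrt_le_sqrt key


lemma LD (M : Multiset ℂ) (w : ℂ) (hw : ∀ r ∈ M, w ≠ r) :
    eval w (derivative (M.map fun r => X - C r).prod)
      = eval w ((M.map fun r => X - C r).prod) * (M.map fun r => (w - r)⁻¹).sum := by
  induction M using Multiset.induction_on with
  | empty => simp
  | cons a M ih =>
    have hwa : w - a ≠ 0 := sub_ne_zero.mpr (hw a (Multiset.mem_cons_self a M))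
    have ih' := ih (fun r hr => hw r (Multiset.mem_cons_of_mem hr))
    simp only [Multiset.map_cons, Multiset.prod_cons, Multiset.sum_cons, derivative_mul,
      derivative_sub, derivative_X, derivative_C, sub_zero, one_mul, eval_add, eval_mul,
      eval_sub, eval_X, eval_C]
    rw [ih']
    field_simp

lemma RE {p : Polynomial ℂ} (hp : p ≠ 0) {k : ℝ} (hk0 : 0 < k)
    (hroots : ∀ r, p.IsRoot r → Complex.abs r ≤ k) {w : ℂ} (hw : k ≤ Complex.abs w)
    (hPw : p.eval w ≠ 0) :
    (p.natDegree : ℝ)/2 ≤ (w * (derivative p).eval w / p.eval w).re := by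
  have hw0 : w ≠ 0 := by
    intro h; rw [h] at hw; simp at hw; linarith
  have hcard : p.roots.card = p.natDegree :=
    IsAlgClosed.card_roots_eq_natDegree
  have hfac := Polynomial.C_leadingCoeff_mul_prod_multiset_X_sub_C hcard
  set M := p.roots with hM
  have hwr : ∀ r ∈ M, w ≠ r := by
    intro r hr he
    have : p.IsRoot r := Polynomial.isRoot_of_mem_roots hr
    rw [← he] at this
    exact hPw this
  set Q := (M.map fun a => X - C a).prod with hQ
  have ha : p.leadingCoeff ≠ 0 := Polynomial.leadingCoeff_ne_zero.mpr hp
  have hQw : Q.eval w ≠ 0 := by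
    intro h0
    apply hPw
    rw [← hfac]
    simp [h0]
  have hD : (derivative p).eval w = p.leadingCoeff * (Q.eval w * (M.map fun r => (w - r)⁻¹).sum) := by
    conv_lhs => rw [← hfac]
    rw [derivative_mul, derivative_C, zero_mul, eval_add, eval_zero, zero_add, eval_mul, eval_C]
    rw [LD M w hwr]
  have hPev : p.eval w = p.leadingCoeff * Q.eval w := by
    conv_lhs => rw [← hfac]; rw [eval_mul, eval_C]
  have hquot : w * (derivative p).eval w / p.eval w = (M.map fun r => w * (w - r)⁻¹).sum := by
    rw [hD, hPev, Multiset.sum_map_mul_left]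
    field_simp
  rw [hquot]
  have hre : ((M.map fun r => w * (w - r)⁻¹).sum).re
      = ((M.map fun r => (w * (w - r)⁻¹).re)).sum := by
    have h := map_multiset_sum Complex.reAddGroupHom (M.map fun r => w * (w - r)⁻¹)
    rw [Complex.coe_reAddGroupHom] at h
    rw [h, Multiset.map_map]
    rfl
  rw [hre]
  have hbound : ∀ x ∈ M.map fun r => (w * (w - r)⁻¹).re, (2:ℝ)⁻¹ ≤ x := by
    intro x hx
    obtain ⟨r, hr, rfl⟩ := Multiset.mem_map.mp hx
    have h1 : w * (w - r)⁻¹ = (1 - r/w)⁻¹ := by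
      rw [show w - r = w * (1 - r/w) by field_simp]
      rw [mul_inv]
      rw [← mul_assoc, mul_inv_cancel₀ hw0, one_mul]
    rw [h1]
    apply re_inv_one_sub
    · rw [map_div₀]
      have := hroots r (Polynomial.isRoot_of_mem_roots hr)
      rw [div_le_one (by linarith : (0:ℝ) < Complex.abs w)]
      linarith
    · intro he
      field_simp at he
      exact hwr r hr he.symm
  have := Multiset.card_nsmul_le_sum hbound
  rw [Multiset.card_map, hcard] at this
  have h2 : (p.natDegree : ℝ)/2 = p.natDegree • (2:ℝ)⁻¹ := by
    simp [nsmul_eq_mul]; ring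
  rw [h2]
  exact this


noncomputable def rev (n : ℕ) (z : ℂ) (q : Polynomial ℂ) : Polynomial ℂ :=
  ∑ t ∈ Finset.range (n+1), C (q.coeff t * z^t) * X^(n-t)

lemma rev_eval {q : Polynomial ℂ} {n : ℕ} (hq : q.natDegree ≤ n) (z : ℂ) {s : ℂ} (hs : s ≠ 0) :
    (rev n z q).eval s = s^n * q.eval (z/s) := by
  rw [rev, eval_finset_sum]
  rw [Polynomial.eval_eq_sum_range' (Nat.lt_succ_of_le hq) (z/s)]
  rw [Finset.mul_sum]
  apply Finset.sum_congr rfl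
  intro t ht
  rw [Finset.mem_range, Nat.lt_succ_iff] at ht
  rw [eval_mul, eval_C, eval_pow, eval_X, div_pow]
  rw [show s^n = s^(n-t) * s^t by rw [← pow_add]; congr 1; omega]
  have hst : (s:ℂ)^t ≠ 0 := pow_ne_zero _ hs
  field_simp

lemma rev_coeff {q : Polynomial ℂ} (n : ℕ) (z : ℂ) {j : ℕ} (hj : j ≤ n) :
    (rev n z q).coeff j = q.coeff (n-j) * z^(n-j) := by
  rw [rev, Polynomial.finset_sum_coeff]
  rw [Finset.sum_eq_single (n-j)]
  · rw [Polynomial.coeff_C_mul, Polynomial.coeff_X_pow, if_pos (by omega)]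
    simp
  · intro t ht hne
    rw [Finset.mem_range, Nat.lt_succ_iff] at ht
    rw [Polynomial.coeff_C_mul, Polynomial.coeff_X_pow, if_neg (by omega), mul_zero]
  · intro h
    exact absurd (Finset.mem_range.mpr (by omega)) h

lemma nonvanish {p : Polynomial ℂ} {k : ℝ}
    (hroots : ∀ r, p.IsRoot r → Complex.abs r ≤ k) {w : ℂ} (hw : k < Complex.abs w) :
    p.eval w ≠ 0 := by
  intro h
  exact absurd (hroots w h) (not_le.mpr hw)

section Key

variable {P : Polynomial ℂ} {n μ : ℕ} {k : ℝ}

lemma Pprime_ne (hP : P ≠ 0) (hn : P.natDegree = n) (hn1 : 1 ≤ n) (hk0 : 0 < k)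
    (hroots : ∀ r, P.IsRoot r → Complex.abs r ≤ k) {w : ℂ} (hw : k < Complex.abs w) :
    (derivative P).eval w ≠ 0 := by
  have hPw := nonvanish hroots hw
  have hre := RE hP hk0 hroots hw.le hPw
  rw [hn] at hre
  intro h0
  rw [h0, mul_zero, zero_div] at hre
  simp only [Complex.zero_re] at hre
  have : (0:ℝ) < (n:ℝ)/2 := by positivity
  linarith

lemma DEp (hP : P ≠ 0) (hn : P.natDegree = n) (hk0 : 0 < k)
    (hroots : ∀ r, P.IsRoot r → Complex.abs r ≤ k) {w : ℂ} (hw : k ≤ Complex.abs w)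
    (hPw : P.eval w ≠ 0) :
    Complex.abs ((n:ℂ) * P.eval w - w * (derivative P).eval w)
      ≤ Complex.abs (w * (derivative P).eval w) := by
  have hre := RE hP hk0 hroots hw hPw
  rw [hn] at hre
  exact DE _ _ hPw hre

lemma key (hn : P.natDegree = n) (hn1 : 1 ≤ n) (hμ1 : 1 ≤ μ) (hμn : μ ≤ n)
    (hgap : ∀ ν : ℕ, 1 ≤ ν → ν < μ → P.coeff (n - ν) = 0)
    (hk0 : 0 < k) (hk : k ≤ 1)
    (hroots : ∀ r, P.IsRoot r → Complex.abs r ≤ k) {z : ℂ} (hz : Complex.abs z = 1) :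
    Complex.abs ((n:ℂ) * P.eval z - z * (derivative P).eval z)
      ≤ k^μ * Complex.abs ((derivative P).eval z) := by
  have hP : P ≠ 0 := by
    intro h; rw [h] at hn; simp at hn; omega
  have hz0 : z ≠ 0 := by
    intro h; rw [h] at hz; simp at hz
  rcases eq_or_lt_of_le hk with hk1 | hk1
  · -- k = 1 case
    subst hk1
    simp only [one_pow, one_mul]
    have hstep : ∀ r : ℝ, 1 < r →
        Complex.abs ((n:ℂ) * P.eval ((r:ℂ)*z) - ((r:ℂ)*z) * (derivative P).eval ((r:ℂ)*z))
          ≤ Complex.abs (((r:ℂ)*z) * (derivative P).eval ((r:ℂ)*z)) := by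
      intro r hr
      have habs : Complex.abs ((r:ℂ)*z) = r := by
        rw [map_mul, Complex.abs_ofReal, hz, mul_one, abs_of_pos (by linarith)]
      have hwgt : (1:ℝ) < Complex.abs ((r:ℂ)*z) := by rw [habs]; exact hr
      exact DEp hP hn hk0 hroots hwgt.le (nonvanish hroots hwgt)
    -- take limit r → 1⁺
    have hgc : ∀ q : Polynomial ℂ, Continuous (fun r : ℝ => q.eval ((r:ℂ)*z)) := by
      intro q
      exact q.continuous.comp (continuous_ofReal.mul continuous_const)
    have hc1 : ContinuousAt (fun r : ℝ =>
        Complex.abs ((n:ℂ) * P.eval ((r:ℂ)*z) - ((r:ℂ)*z) * (derivative P).eval ((r:ℂ)*z))) 1 := by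
      apply Continuous.continuousAt
      apply Complex.continuous_abs.comp
      exact ((continuous_const.mul (hgc P)).sub
        ((continuous_ofReal.mul continuous_const).mul (hgc (derivative P))))
    have hc2 : ContinuousAt (fun r : ℝ =>
        Complex.abs (((r:ℂ)*z) * (derivative P).eval ((r:ℂ)*z))) 1 := by
      apply Continuous.continuousAt
      apply Complex.continuous_abs.comp
      exact ((continuous_ofReal.mul continuous_const).mul (hgc (derivative P)))
    have t1 := hc1.tendsto.mono_left (nhdsWithin_le_nhds (s := Set.Ioi (1:ℝ)))
    have t2 := hc2.tendsto.mono_left (nhdsWithin_le_nhds (s := Set.Ioi (1:ℝ)))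
    have hev : ∀ᶠ (r : ℝ) in nhdsWithin (1:ℝ) (Set.Ioi (1:ℝ)),
        Complex.abs ((n:ℂ) * P.eval ((r:ℂ)*z) - ((r:ℂ)*z) * (derivative P).eval ((r:ℂ)*z))
          ≤ Complex.abs (((r:ℂ)*z) * (derivative P).eval ((r:ℂ)*z)) := by
      filter_upwards [self_mem_nhdsWithin] with r hr
      exact hstep r hr
    have hle := le_of_tendsto_of_tendsto t1 t2 hev
    simpa [map_mul, hz] using hle
  · -- k < 1 case
    have hik : 1 < k⁻¹ := by
      rw [← one_div]
      exact (one_lt_div hk0).mpr hk1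
    set a := P.leadingCoeff with ha
    have haz : a ≠ 0 := leadingCoeff_ne_zero.mpr hP
    set E := X * derivative P with hE
    set Dp := C (n:ℂ) * P - X * derivative P with hDp
    have hEdeg : E.natDegree ≤ n := by
      refine le_trans (natDegree_mul_le) ?_
      have h1 := natDegree_derivative_le P
      rw [natDegree_X, hn] at *
      omega
    have hDdeg : Dp.natDegree ≤ n := by
      refine le_trans (natDegree_sub_le _ _) (max_le ?_ ?_)
      · exact le_trans (natDegree_C_mul_le _ _) hn.le
      · exact hEdeg
    have hEeval : ∀ w : ℂ, E.eval w = w * (derivative P).eval w := by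
      intro w; rw [hE]; simp
    have hDeval : ∀ w : ℂ, Dp.eval w = (n:ℂ) * P.eval w - w * (derivative P).eval w := by
      intro w; rw [hDp]; simp
    have hDcoeff : ∀ t : ℕ, n - μ < t → Dp.coeff t = 0 := by
      intro t ht
      by_cases htn : n < t
      · exact coeff_eq_zero_of_natDegree_lt (lt_of_le_of_lt hDdeg htn)
      push_neg at htn
      have ht1 : 1 ≤ t := by omega
      obtain ⟨s, rfl⟩ : ∃ s, t = s + 1 := ⟨t - 1, by omega⟩
      rw [hDp, coeff_sub, coeff_C_mul, coeff_X_mul, coeff_derivative]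
      by_cases hsn : s + 1 = n
      · rw [← hsn]
        push_cast
        ring
      · have : P.coeff (s+1) = 0 := by
          have := hgap (n - (s+1)) (by omega) (by omega)
          rwa [show n - (n - (s+1)) = s + 1 by omega] at this
        rw [this]
        ring
    have hNum0 : ∀ j, j < μ → (rev n z Dp).coeff j = 0 := by
      intro j hj
      rw [rev_coeff n z (by omega : j ≤ n), hDcoeff (n - j) (by omega), zero_mul]
    obtain ⟨B, hB⟩ : X^μ ∣ rev n z Dp := Polynomial.X_pow_dvd_iff.mpr hNum0
    have hDen0 : ∀ s : ℂ, Complex.abs s < k⁻¹ → (rev n z E).eval s ≠ 0 := by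
      intro s hs
      by_cases hs0 : s = 0
      · subst hs0
        rw [← coeff_zero_eq_eval_zero, rev_coeff n z (Nat.zero_le n), Nat.sub_zero]
        have hEn : E.coeff n = a * n := by
          rw [hE, show n = (n-1) + 1 by omega, coeff_X_mul, coeff_derivative]
          rw [show n - 1 + 1 = n by omega]
          rw [← hn, coeff_natDegree, ← ha, hn, Nat.cast_sub hn1]
          push_cast
          ring
        rw [hEn]
        exact mul_ne_zero (mul_ne_zero haz (Nat.cast_ne_zero.mpr (by omega)))
          (pow_ne_zero _ hz0)
      · rw [rev_eval hEdeg z hs0]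
        apply mul_ne_zero (pow_ne_zero _ hs0)
        rw [hEeval]
        have hsp : 0 < Complex.abs s := by
          simpa [AbsoluteValue.pos_iff] using hs0
        have hklt : k < Complex.abs (z / s) := by
          rw [map_div₀, hz]
          rw [lt_div_iff₀ hsp]
          calc k * Complex.abs s < k * k⁻¹ := by
                apply mul_lt_mul_of_pos_left hs hk0
            _ = 1 := mul_inv_cancel₀ (ne_of_gt hk0)
        exact mul_ne_zero (div_ne_zero hz0 hs0) (Pprime_ne hP hn hn1 hk0 hroots hklt)
    have hfr : ∀ r : ℝ, 1 < r → r < k⁻¹ →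
        Complex.abs (B.eval 1 / (rev n z E).eval 1) ≤ (r^μ)⁻¹ := by
      intro r hr1 hrk
      have hr0 : (0:ℝ) < r := by linarith
      have hcl : closure (Metric.ball (0:ℂ) r) = Metric.closedBall 0 r :=
        closure_ball 0 (ne_of_gt hr0)
      have hdiff : DiffContOnCl ℂ (fun s => B.eval s / (rev n z E).eval s)
          (Metric.ball (0:ℂ) r) := by
        apply DifferentiableOn.diffContOnCl
        rw [hcl]
        apply DifferentiableOn.div
        · exact B.differentiable.differentiableOn
        · exact (rev n z E).differentiable.differentiableOn
        · intro x hx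
          apply hDen0
          rw [Metric.mem_closedBall, Complex.dist_eq, sub_zero] at hx
          exact lt_of_le_of_lt hx hrk
      have hbound : ∀ s ∈ frontier (Metric.ball (0:ℂ) r),
          ‖B.eval s / (rev n z E).eval s‖ ≤ (r^μ)⁻¹ := by
        intro s hsf
        rw [frontier_ball 0 (ne_of_gt hr0)] at hsf
        have hsr : Complex.abs s = r := by
          rwa [mem_sphere_iff_norm, sub_zero] at hsf
        have hs0 : s ≠ 0 := by
          intro h0; rw [h0] at hsr; simp at hsr; linarith
        have hsltk : Complex.abs s < k⁻¹ := by rw [hsr]; exact hrk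
        have hDenne := hDen0 s hsltk
        have hw : k < Complex.abs (z / s) := by
          rw [map_div₀, hz, hsr, lt_div_iff₀ hr0]
          calc k * r < k * k⁻¹ := mul_lt_mul_of_pos_left hrk hk0
            _ = 1 := mul_inv_cancel₀ (ne_of_gt hk0)
        have hPw : P.eval (z/s) ≠ 0 := nonvanish hroots hw
        have hDE := DEp hP hn hk0 hroots hw.le hPw
        have hNum : Complex.abs ((rev n z Dp).eval s) ≤ Complex.abs ((rev n z E).eval s) := by
          rw [rev_eval hDdeg z hs0, rev_eval hEdeg z hs0, map_mul, map_mul]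
          apply mul_le_mul_of_nonneg_left _ (AbsoluteValue.nonneg _ _)
          rw [hDeval, hEeval]
          exact hDE
        have hNumB : Complex.abs ((rev n z Dp).eval s) = r^μ * Complex.abs (B.eval s) := by
          rw [hB, eval_mul, map_mul, eval_pow, eval_X, map_pow, hsr]
        rw [norm_div]
        rw [div_le_iff₀ (norm_pos_iff.mpr hDenne)]
        have h1 : Complex.abs (B.eval s) = (r^μ)⁻¹ * Complex.abs ((rev n z Dp).eval s) := by
          rw [hNumB]
          field_simp
        have h2 : Complex.abs (B.eval s) ≤ (r^μ)⁻¹ * Complex.abs ((rev n z E).eval s) := by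
          rw [h1]
          exact mul_le_mul_of_nonneg_left hNum (by positivity)
        simpa [Complex.norm_eq_abs] using h2
      have := Complex.norm_le_of_forall_mem_frontier_norm_le Metric.isBounded_ball hdiff hbound
        (show (1:ℂ) ∈ closure (Metric.ball (0:ℂ) r) by
          rw [hcl, Metric.mem_closedBall, Complex.dist_eq, sub_zero]
          simpa using hr1.le)
      exact this
    -- take limit r → k⁻¹ from the left
    have hlim : Filter.Tendsto (fun r : ℝ => (r^μ)⁻¹) (nhdsWithin k⁻¹ (Set.Iio k⁻¹))
        (nhds (k^μ)) := by
      have hc : ContinuousAt (fun r : ℝ => (r^μ)⁻¹) k⁻¹ := by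
        apply ContinuousAt.inv₀ (by fun_prop)
        positivity
      have : ((k⁻¹:ℝ)^μ)⁻¹ = k^μ := by
        rw [← inv_pow, inv_inv]
      rw [← this]
      exact hc.tendsto.mono_left nhdsWithin_le_nhds
    have hfin : Complex.abs (B.eval 1 / (rev n z E).eval 1) ≤ k^μ := by
      apply ge_of_tendsto hlim
      filter_upwards [Ioo_mem_nhdsLT_of_mem (show k⁻¹ ∈ Set.Ioc (1:ℝ) k⁻¹ from ⟨hik, le_refl _⟩)]
        with r hr
      exact hfr r hr.1 hr.2
    -- final assembly
    have hDen1 : (rev n z E).eval 1 = z * (derivative P).eval z := by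
      rw [rev_eval hEdeg z one_ne_zero, one_pow, one_mul, div_one, hEeval]
    have hNum1 : (rev n z Dp).eval 1 = (n:ℂ) * P.eval z - z * (derivative P).eval z := by
      rw [rev_eval hDdeg z one_ne_zero, one_pow, one_mul, div_one, hDeval]
    have hB1 : B.eval 1 = (rev n z Dp).eval 1 := by
      rw [hB, eval_mul, eval_pow, eval_X, one_pow, one_mul]
    have hDen1ne : (rev n z E).eval 1 ≠ 0 := hDen0 1 (by simpa using hik)
    rw [map_div₀, div_le_iff₀ (by
      simpa [AbsoluteValue.pos_iff] using hDen1ne : (0:ℝ) < Complex.abs ((rev n z E).eval 1))] at hfin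
    rw [hB1, hNum1] at hfin
    calc Complex.abs ((n:ℂ) * P.eval z - z * (derivative P).eval z)
        ≤ k^μ * Complex.abs ((rev n z E).eval 1) := hfin
      _ = k^μ * Complex.abs ((derivative P).eval z) := by
          rw [hDen1, map_mul, hz, one_mul]

end Key

lemma ext_min {P : Polynomial ℂ} {n : ℕ} {k : ℝ} (hP : P ≠ 0) (hn : P.natDegree = n)
    (hn1 : 1 ≤ n) (hk0 : 0 < k)
    (hroots : ∀ r, P.IsRoot r → Complex.abs r ≤ k) (m : ℝ) (hm0 : 0 < m)
    (hm : ∀ w : ℂ, Complex.abs w = k → m ≤ Complex.abs (P.eval w)) :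
    m / k^n ≤ Complex.abs P.leadingCoeff ∧
      ∀ w : ℂ, k ≤ Complex.abs w → m / k^n * Complex.abs w ^ n ≤ Complex.abs (P.eval w) := by
  have hkn : (0:ℝ) < k^n := by positivity
  set RP := rev n 1 P with hRP
  have hRP0 : ∀ s : ℂ, Complex.abs s ≤ k⁻¹ → RP.eval s ≠ 0 := by
    intro s hs
    by_cases hs0 : s = 0
    · subst hs0
      rw [← coeff_zero_eq_eval_zero, hRP, rev_coeff n 1 (Nat.zero_le n), Nat.sub_zero, one_pow,
        mul_one, ← hn, coeff_natDegree]
      exact leadingCoeff_ne_zero.mpr hP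
    · rw [hRP, rev_eval hn.le 1 hs0]
      apply mul_ne_zero (pow_ne_zero _ hs0)
      have hsp : 0 < Complex.abs s := by simpa [AbsoluteValue.pos_iff] using hs0
      have habs : k ≤ Complex.abs (1 / s) := by
        rw [map_div₀, map_one, le_div_iff₀ hsp]
        calc k * Complex.abs s ≤ k * k⁻¹ := by
              exact mul_le_mul_of_nonneg_left hs hk0.le
          _ = 1 := mul_inv_cancel₀ (ne_of_gt hk0)
      rcases eq_or_lt_of_le habs with he | hlt
      · intro h0
        have := hm (1/s) he.symm
        rw [h0] at this
        simp at this
        linarith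
      · exact nonvanish hroots hlt
  have hmain : ∀ s : ℂ, Complex.abs s ≤ k⁻¹ → m / k^n ≤ Complex.abs (RP.eval s) := by
    intro s hs
    have hik0 : (0:ℝ) < k⁻¹ := by positivity
    have hcl : closure (Metric.ball (0:ℂ) k⁻¹) = Metric.closedBall 0 k⁻¹ :=
      closure_ball 0 (ne_of_gt hik0)
    have hdiff : DiffContOnCl ℂ (fun s => (RP.eval s)⁻¹) (Metric.ball (0:ℂ) k⁻¹) := by
      apply DifferentiableOn.diffContOnCl
      rw [hcl]
      apply DifferentiableOn.inv
      · exact RP.differentiable.differentiableOn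
      · intro x hx
        apply hRP0
        rwa [Metric.mem_closedBall, Complex.dist_eq, sub_zero] at hx
    have hbound : ∀ t ∈ frontier (Metric.ball (0:ℂ) k⁻¹),
        ‖(RP.eval t)⁻¹‖ ≤ (m / k^n)⁻¹ := by
      intro t htf
      rw [frontier_ball 0 (ne_of_gt hik0)] at htf
      have htr : Complex.abs t = k⁻¹ := by rwa [mem_sphere_iff_norm, sub_zero] at htf
      have ht0 : t ≠ 0 := by
        intro h0; rw [h0] at htr; simp at htr
        exact absurd htr (ne_of_gt hk0).symm
      have habs : Complex.abs (1/t) = k := by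
        rw [map_div₀, map_one, htr, one_div, inv_inv]
      have hlow : m / k^n ≤ Complex.abs (RP.eval t) := by
        rw [hRP, rev_eval hn.le 1 ht0, map_mul, map_pow, htr]
        have := hm (1/t) habs
        calc m / k^n = (k⁻¹)^n * m := by
              rw [inv_pow]; ring
          _ ≤ (k⁻¹)^n * Complex.abs (P.eval (1/t)) := by
              apply mul_le_mul_of_nonneg_left this (by positivity)
      rw [norm_inv, Complex.norm_eq_abs]
      apply inv_anti₀ (by positivity) hlow
    have := Complex.norm_le_of_forall_mem_frontier_norm_le Metric.isBounded_ball hdiff hbound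
      (show s ∈ closure (Metric.ball (0:ℂ) k⁻¹) by
        rw [hcl, Metric.mem_closedBall, Complex.dist_eq, sub_zero]; exact hs)
    rw [norm_inv, Complex.norm_eq_abs] at this
    have habs0 : 0 < Complex.abs (RP.eval s) := by
      simpa [AbsoluteValue.pos_iff] using hRP0 s hs
    rw [inv_le_inv₀ habs0 (by positivity)] at this
    exact this
  constructor
  · have := hmain 0 (by simpa using (by positivity : (0:ℝ) ≤ k⁻¹))
    rw [← coeff_zero_eq_eval_zero, hRP, rev_coeff n 1 (Nat.zero_le n), Nat.sub_zero, one_pow,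
      mul_one, ← hn, coeff_natDegree] at this
    rwa [hn] at this
  · intro w hw
    have hw0 : w ≠ 0 := by
      intro h0; rw [h0] at hw; simp at hw; linarith
    have hwp : 0 < Complex.abs w := by simpa [AbsoluteValue.pos_iff] using hw0
    have hs : Complex.abs w⁻¹ ≤ k⁻¹ := by
      rw [map_inv₀]
      exact inv_anti₀ hk0 hw
    have := hmain w⁻¹ hs
    rw [hRP, rev_eval hn.le 1 (inv_ne_zero hw0), one_div, inv_inv, map_mul, map_pow, map_inv₀]
      at this
    calc m / k^n * Complex.abs w ^ n
        = (Complex.abs w)^n * (m / k^n) := by ring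
      _ ≤ (Complex.abs w)^n * ((Complex.abs w)⁻¹^n * Complex.abs (P.eval w)) := by
          apply mul_le_mul_of_nonneg_left this (by positivity)
      _ = Complex.abs (P.eval w) := by
          rw [← mul_assoc, ← mul_pow, mul_inv_cancel₀ (ne_of_gt hwp), one_pow, one_mul]

lemma pert {P : Polynomial ℂ} {n μ : ℕ} {k : ℝ} (hP : P ≠ 0) (hn : P.natDegree = n)
    (hn1 : 1 ≤ n) (hμ1 : 1 ≤ μ) (hμn : μ ≤ n)
    (hgap : ∀ ν : ℕ, 1 ≤ ν → ν < μ → P.coeff (n - ν) = 0)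
    (hk0 : 0 < k)
    (hroots : ∀ r, P.IsRoot r → Complex.abs r ≤ k) {m : ℝ} (hm0 : 0 < m)
    (hm : ∀ w : ℂ, Complex.abs w = k → m ≤ Complex.abs (P.eval w))
    {b : ℂ} (hb : Complex.abs b < m / k^n) :
    (P - C b * X^n).natDegree = n ∧
      (∀ r, (P - C b * X^n).IsRoot r → Complex.abs r ≤ k) ∧
      (∀ ν : ℕ, 1 ≤ ν → ν < μ → (P - C b * X^n).coeff (n - ν) = 0) ∧
      (P - C b * X^n) ≠ 0 := by
  obtain ⟨hlead, hext⟩ := ext_min hP hn hn1 hk0 hroots m hm0 hm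
  set Q := P - C b * X^n with hQ
  have hQcoeffn : Q.coeff n = P.coeff n - b := by
    rw [hQ, coeff_sub, coeff_C_mul, coeff_X_pow, if_pos rfl, mul_one]
  have hQn : Q.coeff n ≠ 0 := by
    rw [hQcoeffn]
    intro h0
    have : P.coeff n = b := by rwa [sub_eq_zero] at h0
    rw [← hn, coeff_natDegree] at this
    rw [← this] at hb
    exact absurd hlead (not_le.mpr hb)
  have hdeg : Q.natDegree = n := by
    apply le_antisymm
    · refine le_trans (natDegree_sub_le _ _) (max_le hn.le ?_)
      exact le_trans (natDegree_C_mul_le _ _) (natDegree_X_pow n).le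
    · exact le_natDegree_of_ne_zero hQn
  refine ⟨hdeg, ?_, ?_, ?_⟩
  · intro r hr
    by_contra hgt
    push_neg at hgt
    have hrp : 0 < Complex.abs r := lt_trans hk0 hgt
    have h1 : m / k^n * Complex.abs r ^ n ≤ Complex.abs (P.eval r) := hext r hgt.le
    have h2 : Complex.abs ((C b * X^n).eval r) < m / k^n * Complex.abs r ^ n := by
      rw [eval_mul, eval_C, eval_pow, eval_X, map_mul, map_pow]
      exact mul_lt_mul_of_pos_right hb (by positivity)
    have h3 : Q.eval r = 0 := hr
    rw [hQ, eval_sub] at h3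
    have h4 : P.eval r = (C b * X^n).eval r := sub_eq_zero.mp h3
    rw [← h4] at h2
    linarith
  · intro ν hν1 hνμ
    rw [hQ, coeff_sub, coeff_C_mul, coeff_X_pow, if_neg (by omega), mul_zero, sub_zero]
    exact hgap ν hν1 hνμ
  · intro h0
    rw [h0] at hQn
    simp at hQn

lemma deriv_lb {P : Polynomial ℂ} {n μ : ℕ} {k : ℝ} (hP : P ≠ 0) (hn : P.natDegree = n)
    (hn1 : 1 ≤ n) (hμ1 : 1 ≤ μ) (hμn : μ ≤ n)
    (hgap : ∀ ν : ℕ, 1 ≤ ν → ν < μ → P.coeff (n - ν) = 0)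
    (hk0 : 0 < k) (hk : k ≤ 1)
    (hroots : ∀ r, P.IsRoot r → Complex.abs r ≤ k) {m : ℝ} (hm0 : 0 < m)
    (hm : ∀ w : ℂ, Complex.abs w = k → m ≤ Complex.abs (P.eval w))
    {z : ℂ} (hz : Complex.abs z = 1) :
    (n : ℝ) * (m / k^n) ≤ Complex.abs ((derivative P).eval z) := by
  have hinner : ∀ w : ℂ, k < Complex.abs w →
      (n : ℝ) * (m / k^n) * Complex.abs w ^ (n-1) ≤ Complex.abs ((derivative P).eval w) := by
    intro w hw
    by_contra hlt
    push_neg at hlt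
    have hw0 : w ≠ 0 := by
      intro h0; rw [h0] at hw; simp at hw; linarith
    have hwp : 0 < Complex.abs w := by simpa [AbsoluteValue.pos_iff] using hw0
    set b := (derivative P).eval w / ((n:ℂ) * w^(n-1)) with hb
    have hnc : ((n:ℂ) * w^(n-1)) ≠ 0 :=
      mul_ne_zero (Nat.cast_ne_zero.mpr (by omega)) (pow_ne_zero _ hw0)
    have hbabs : Complex.abs b < m / k^n := by
      rw [hb, map_div₀, map_mul, map_pow, Complex.abs_natCast]
      rw [div_lt_iff₀ (by positivity)]
      calc Complex.abs ((derivative P).eval w)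
          < (n : ℝ) * (m / k^n) * Complex.abs w ^ (n-1) := hlt
        _ = m / k^n * ((n:ℝ) * Complex.abs w ^ (n-1)) := by ring
    obtain ⟨hdeg, hroots', hgap', hne⟩ := pert hP hn hn1 hμ1 hμn hgap hk0 hroots hm0 hm hbabs
    have hder : (derivative (P - C b * X^n)).eval w = 0 := by
      rw [derivative_sub, derivative_C_mul, derivative_X_pow, eval_sub, eval_mul, eval_C,
        eval_mul, eval_C, eval_pow, eval_X]
      rw [hb]
      field_simp
      simp [div_self (Nat.cast_ne_zero.mpr (by omega : n ≠ 0) : (n:ℂ) ≠ 0)]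
    exact Pprime_ne hne hdeg hn1 hk0 hroots' hw hder
  -- limit r → 1⁺
  have hgc : Continuous (fun r : ℝ => Complex.abs ((derivative P).eval ((r:ℂ)*z))) :=
    Complex.continuous_abs.comp ((derivative P).continuous.comp
      (Complex.continuous_ofReal.mul continuous_const))
  have t1 := (hgc.continuousAt (x := 1)).tendsto.mono_left
    (nhdsWithin_le_nhds (s := Set.Ioi (1:ℝ)))
  have hev : ∀ᶠ (r : ℝ) in nhdsWithin (1:ℝ) (Set.Ioi (1:ℝ)),
      (n : ℝ) * (m / k^n) ≤ Complex.abs ((derivative P).eval ((r:ℂ)*z)) := by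
    filter_upwards [self_mem_nhdsWithin] with r hr
    have hr1 : (1:ℝ) < r := hr
    have habs : Complex.abs ((r:ℂ)*z) = r := by
      rw [map_mul, Complex.abs_ofReal, hz, mul_one, abs_of_pos (by linarith)]
    have hkr : k < Complex.abs ((r:ℂ)*z) := by rw [habs]; linarith
    calc (n:ℝ) * (m / k^n) = (n:ℝ) * (m / k^n) * 1 := by ring
      _ ≤ (n:ℝ) * (m / k^n) * Complex.abs ((r:ℂ)*z) ^ (n-1) := by
          apply mul_le_mul_of_nonneg_left _ (by positivity)
          apply one_le_pow₀
          rw [habs]; linarith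
      _ ≤ Complex.abs ((derivative P).eval ((r:ℂ)*z)) := hinner _ hkr
  have := ge_of_tendsto t1 hev
  simpa [hz] using this

lemma refined {P : Polynomial ℂ} {n μ : ℕ} {k : ℝ} (hP : P ≠ 0) (hn : P.natDegree = n)
    (hn1 : 1 ≤ n) (hμ1 : 1 ≤ μ) (hμn : μ ≤ n)
    (hgap : ∀ ν : ℕ, 1 ≤ ν → ν < μ → P.coeff (n - ν) = 0)
    (hk0 : 0 < k) (hk : k ≤ 1)
    (hroots : ∀ r, P.IsRoot r → Complex.abs r ≤ k) {m : ℝ} (hm0 : 0 < m)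
    (hm : ∀ w : ℂ, Complex.abs w = k → m ≤ Complex.abs (P.eval w))
    {z : ℂ} (hz : Complex.abs z = 1) :
    (n:ℝ) * Complex.abs (P.eval z) + (n:ℝ) * (m / k^n) * k^μ
      ≤ (1 + k^μ) * Complex.abs ((derivative P).eval z) := by
  set c : ℝ := m / k^n with hc
  have hc0 : 0 < c := by positivity
  set A : ℝ := Complex.abs ((derivative P).eval z) with hA
  have hd : (n:ℝ) * c ≤ A := deriv_lb hP hn hn1 hμ1 hμn hgap hk0 hk hroots hm0 hm hz
  have hA0 : 0 < A := lt_of_lt_of_le (by positivity) hd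
  have hz0 : z ≠ 0 := by
    intro h0; rw [h0] at hz; simp at hz
  have hDkey : ∀ t : ℝ, 0 < t → t < 1 →
      Complex.abs ((n:ℂ) * P.eval z - z * (derivative P).eval z) ≤ k^μ * (A - t * ((n:ℝ)*c)) := by
    intro t ht0 ht1
    set ψ : ℂ := (derivative P).eval z / (A:ℂ) with hψ
    have hψabs : Complex.abs ψ = 1 := by
      rw [hψ, map_div₀, ← hA]
      rw [Complex.abs_ofReal, abs_of_pos hA0, div_self (ne_of_gt hA0)]
    set b : ℂ := ((t*c : ℝ):ℂ) * ψ * (z^(n-1))⁻¹ with hb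
    have hbabs : Complex.abs b < c := by
      rw [hb, map_mul, map_mul, map_inv₀, map_pow, hz, one_pow, inv_one, mul_one, hψabs, mul_one,
        Complex.abs_ofReal, abs_of_pos (by positivity)]
      nlinarith
    obtain ⟨hdeg, hroots', hgap', hne⟩ := pert hP hn hn1 hμ1 hμn hgap hk0 hroots hm0 hm hbabs
    have hQD : (n:ℂ) * (P - C b * X^n).eval z - z * (derivative (P - C b * X^n)).eval z
        = (n:ℂ) * P.eval z - z * (derivative P).eval z := by
      rw [derivative_sub, derivative_C_mul, derivative_X_pow, eval_sub, eval_sub, eval_mul,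
        eval_C, eval_mul, eval_C, eval_mul, eval_C, eval_pow, eval_X, eval_pow, eval_X]
      have hzn : z * z^(n-1) = z^n := by
        rw [← pow_succ']
        congr 1
        omega
      linear_combination (n:ℂ) * b * hzn
    have hQ' : (derivative (P - C b * X^n)).eval z = ((A - t*((n:ℝ)*c) : ℝ):ℂ) * ψ := by
      rw [derivative_sub, derivative_C_mul, derivative_X_pow, eval_sub, eval_mul, eval_C,
        eval_mul, eval_C, eval_pow, eval_X]
      have hzu : b * ((n:ℂ) * z^(n-1)) = ((t*c:ℝ):ℂ) * (n:ℂ) * ψ := by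
        rw [hb]
        field_simp
      rw [hzu]
      have hAne : (A:ℂ) ≠ 0 := Complex.ofReal_ne_zero.mpr (ne_of_gt hA0)
      have hPψ : (derivative P).eval z = (A:ℂ) * ψ := by
        rw [hψ, mul_div_assoc']
        exact (mul_div_cancel_left₀ _ hAne).symm
      rw [hPψ]
      push_cast
      ring
    have hkey := key hdeg hn1 hμ1 hμn hgap' hk0 hk hroots' hz
    rw [hQD, hQ'] at hkey
    calc Complex.abs ((n:ℂ) * P.eval z - z * (derivative P).eval z)
        ≤ k^μ * Complex.abs (((A - t*((n:ℝ)*c) : ℝ):ℂ) * ψ) := hkey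
      _ = k^μ * (A - t*((n:ℝ)*c)) := by
          rw [map_mul, hψabs, mul_one, Complex.abs_ofReal, _root_.abs_of_nonneg (by nlinarith)]
  -- limit t → 1⁻
  have hlim : Filter.Tendsto (fun t : ℝ => k^μ * (A - t * ((n:ℝ)*c)))
      (nhdsWithin (1:ℝ) (Set.Iio (1:ℝ))) (nhds (k^μ * (A - (n:ℝ)*c))) := by
    have hcont : Continuous (fun t : ℝ => k^μ * (A - t * ((n:ℝ)*c))) := by fun_prop
    have := hcont.continuousAt (x := (1:ℝ))
    have h1 : k^μ * (A - 1 * ((n:ℝ)*c)) = k^μ * (A - (n:ℝ)*c) := by ring_nf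
    rw [← h1]
    exact this.tendsto.mono_left nhdsWithin_le_nhds
  have hD : Complex.abs ((n:ℂ) * P.eval z - z * (derivative P).eval z)
      ≤ k^μ * (A - (n:ℝ)*c) := by
    apply ge_of_tendsto hlim
    filter_upwards [Ioo_mem_nhdsLT_of_mem
      (show (1:ℝ) ∈ Set.Ioc (0:ℝ) 1 from ⟨one_pos, le_refl _⟩)] with t htt
    exact hDkey t htt.1 htt.2
  -- triangle inequality
  have htri : (n:ℝ) * Complex.abs (P.eval z)
      ≤ A + Complex.abs ((n:ℂ) * P.eval z - z * (derivative P).eval z) := by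
    have h1 : (n:ℂ) * P.eval z
        = z * (derivative P).eval z + ((n:ℂ) * P.eval z - z * (derivative P).eval z) := by ring
    calc (n:ℝ) * Complex.abs (P.eval z) = Complex.abs ((n:ℂ) * P.eval z) := by
          rw [map_mul, Complex.abs_natCast]
      _ ≤ Complex.abs (z * (derivative P).eval z)
          + Complex.abs ((n:ℂ) * P.eval z - z * (derivative P).eval z) := by
          conv_lhs => rw [h1]
          exact Complex.abs.add_le _ _
      _ = A + Complex.abs ((n:ℂ) * P.eval z - z * (derivative P).eval z) := by
          rw [map_mul, hz, one_mul, ← hA]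
  nlinarith [hD, htri]

lemma circle_eq (c : ℝ) : {z : ℂ | Complex.abs z = c} = Metric.sphere (0:ℂ) c := by
  ext z
  simp [Metric.mem_sphere, Complex.dist_eq]
  exact Iff.rfl

theorem stmt7 (p : Polynomial ℂ) (n μ : ℕ) (hn : p.natDegree = n)
    (hμ1 : 1 ≤ μ) (hμn : μ ≤ n)
    (hcoeff : ∀ ν : ℕ, 1 ≤ ν → ν < μ → p.coeff (n - ν) = 0)
    (k : ℝ) (hk0 : 0 < k) (hk : k ≤ 1)
    (hz : ∀ z : ℂ, p.IsRoot z → ‖z‖ ≤ k) :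
    (n / (1 + k ^ μ)) * (maxMod p 1 + (k ^ (n - μ))⁻¹ * minMod p k) ≤ maxMod (derivative p) 1 := by
  have hn1 : 1 ≤ n := le_trans hμ1 hμn
  have hP : p ≠ 0 := by
    intro h0; rw [h0] at hn; simp at hn; omega
  have hkμ : (0:ℝ) < 1 + k^μ := by positivity
  -- attainment of maxMod p 1
  have hcomp1 : IsCompact ((fun z => Complex.abs (p.eval z)) '' {z : ℂ | Complex.abs z = 1}) := by
    rw [circle_eq]
    exact (isCompact_sphere 0 1).image (Complex.continuous_abs.comp p.continuous)
  have hne1 : ((fun z => Complex.abs (p.eval z)) '' {z : ℂ | Complex.abs z = 1}).Nonempty :=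
    ⟨_, ⟨1, by simp, rfl⟩⟩
  obtain ⟨z₀, hz₀, hz₀v⟩ := hcomp1.sSup_mem hne1
  have hz₀1 : Complex.abs z₀ = 1 := hz₀
  -- maxMod p' bound
  have hcompd : IsCompact ((fun z => Complex.abs ((derivative p).eval z)) ''
      {z : ℂ | Complex.abs z = 1}) := by
    rw [circle_eq]
    exact (isCompact_sphere 0 1).image
      (Complex.continuous_abs.comp (derivative p).continuous)
  have hub : Complex.abs ((derivative p).eval z₀) ≤ maxMod (derivative p) 1 := by
    show _ ≤ sSup _
    exact le_csSup hcompd.bddAbove ⟨z₀, hz₀1, rfl⟩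
  -- minMod facts
  have hm_nonneg : 0 ≤ minMod p k := by
    apply Real.sInf_nonneg
    rintro x ⟨w, hw, rfl⟩
    exact norm_nonneg _
  have hm_le : ∀ w : ℂ, Complex.abs w = k → minMod p k ≤ Complex.abs (p.eval w) := by
    intro w hw
    show sInf _ ≤ _
    have hbb : BddBelow ((fun z => Complex.abs (p.eval z)) '' {z : ℂ | Complex.abs z = k}) := by
      refine ⟨0, ?_⟩
      rintro x ⟨w', hw', rfl⟩
      exact AbsoluteValue.nonneg _ _
    exact csInf_le hbb ⟨w, hw, rfl⟩
  set M := maxMod p 1 with hM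
  set m := minMod p k with hm
  rw [div_mul_eq_mul_div, div_le_iff₀ hkμ]
  have hMz : Complex.abs (p.eval z₀) = M := hz₀v
  rcases eq_or_lt_of_le hm_nonneg with hm0 | hm0
  · -- m = 0
    have hkey := key hn hn1 hμ1 hμn hcoeff hk0 hk hz hz₀1
    have htri : (n:ℝ) * M ≤ (1 + k^μ) * Complex.abs ((derivative p).eval z₀) := by
      have h1 : (n:ℂ) * p.eval z₀
          = z₀ * (derivative p).eval z₀ + ((n:ℂ) * p.eval z₀ - z₀ * (derivative p).eval z₀) := by
        ring
      calc (n:ℝ) * M = Complex.abs ((n:ℂ) * p.eval z₀) := by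
            rw [map_mul, Complex.abs_natCast, hMz]
        _ ≤ Complex.abs (z₀ * (derivative p).eval z₀)
            + Complex.abs ((n:ℂ) * p.eval z₀ - z₀ * (derivative p).eval z₀) := by
            conv_lhs => rw [h1]
            exact Complex.abs.add_le _ _
        _ ≤ 1 * Complex.abs ((derivative p).eval z₀) + k^μ * Complex.abs ((derivative p).eval z₀) := by
            rw [map_mul, hz₀1, one_mul]
            have := Complex.abs.nonneg ((derivative p).eval z₀)
            nlinarith [hkey]
        _ = (1 + k^μ) * Complex.abs ((derivative p).eval z₀) := by ring
    rw [← hm0, mul_zero, add_zero]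
    calc (n:ℝ) * M ≤ (1 + k^μ) * Complex.abs ((derivative p).eval z₀) := htri
      _ ≤ maxMod (derivative p) 1 * (1 + k^μ) := by
          rw [mul_comm (maxMod (derivative p) 1)]
          exact mul_le_mul_of_nonneg_left hub (le_of_lt hkμ)
  · -- m > 0
    have href := refined hP hn hn1 hμ1 hμn hcoeff hk0 hk hz hm0 hm_le hz₀1
    have hknμ : k^n = k^(n-μ) * k^μ := by
      rw [← pow_add]
      congr 1
      omega
    have hterm : (n:ℝ) * (m / k^n) * k^μ = (n:ℝ) * ((k^(n-μ))⁻¹ * m) := by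
      rw [hknμ]
      field_simp
    rw [hMz, hterm] at href
    calc (n:ℝ) * (M + (k^(n-μ))⁻¹ * m)
        = (n:ℝ) * M + (n:ℝ) * ((k^(n-μ))⁻¹ * m) := by ring
      _ ≤ (1 + k^μ) * Complex.abs ((derivative p).eval z₀) := href
      _ ≤ maxMod (derivative p) 1 * (1 + k^μ) := by
          rw [mul_comm (maxMod (derivative p) 1)]
          exact mul_le_mul_of_nonneg_left hub (le_of_lt hkμ)

end AzizShah
end
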